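/- Let A be a p×p real symmetric positive semidefinite matrix of rank d that is in general position, and suppose d ≤ p − 1. Then there exists a vector u ∈ ℝ^p such that A + u uᵀ is positive semidefinite of rank d + 1 and in general position, and moreover the (p+1)×(p+1) bordered matrix with (1,1)-entry 1, first row (1, uᵀ), first column (1, u)ᵀ and lower-right p×p block A + u uᵀ is positive semidefinite of rank d + 1 and in general position. -/

import Mathlib

open Matrix MeasureTheory

/-- Two matrices match on a graph `G`: equal diagonals and equal entries on all edges. -/
def MatchOn {V : Type*} (G : SimpleGraph V) (A B : Matrix V V ℝ) : Prop :=
  (∀ i, A i i = B i i) ∧ ∀ i j, G.Adj i j → A i j = B i j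

/-- A real symmetric positive semidefinite matrix of rank `d` is in general position if
every `d × d` principal submatrix is nonsingular. -/
def InGenPos {V : Type*} [Fintype V] [DecidableEq V] (A : Matrix V V ℝ) (d : ℕ) : Prop :=
  A.PosSemidef ∧ A.rank = d ∧
    ∀ α : Finset V, α.card = d →
      (A.submatrix (fun i : α => (i : V)) (fun i : α => (i : V))).det ≠ 0

/-- The defining property of the Gaussian rank at level `r`. -/
def GRankProp {V : Type*} [Fintype V] [DecidableEq V] (G : SimpleGraph V) (r : ℕ) : Prop :=
  ∀ A : Matrix V V ℝ, InGenPos A r → ∃ P : Matrix V V ℝ, P.PosDef ∧ MatchOn G P A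

/-- The Gaussian rank of a graph. -/
noncomputable def gaussianRank {V : Type*} [Fintype V] [DecidableEq V]
    (G : SimpleGraph V) : ℕ :=
  sInf {r : ℕ | 0 < r ∧ GRankProp G r}

/-- Vertex connectivity: the least size of a vertex set whose deletion disconnects the
graph or leaves at most one vertex. -/
noncomputable def vertexConn {V : Type*} (G : SimpleGraph V) : ℕ :=
  sInf {k : ℕ | ∃ S : Set V, S.ncard = k ∧
    (¬ (G.induce Sᶜ).Connected ∨ Sᶜ.ncard ≤ 1)}

/-- Subgraph connectivity number: the maximum vertex connectivity over all subgraphs. -/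
noncomputable def subgraphConn {V : Type*} (G : SimpleGraph V) : ℕ :=
  sSup {k : ℕ | ∃ H : G.Subgraph, vertexConn H.coe = k}

/-- Minimum degree of a graph. -/
noncomputable def minDeg {V : Type*} (G : SimpleGraph V) : ℕ :=
  sInf {k : ℕ | ∃ v, (G.neighborSet v).ncard = k}

/-- Degeneracy number: the maximum over all subgraphs of the minimum degree. -/
noncomputable def degeneracy {V : Type*} (G : SimpleGraph V) : ℕ :=
  sSup {k : ℕ | ∃ H : G.Subgraph, minDeg H.coe = k}

set_option linter.unusedSectionVars false
set_option maxHeartbeats 1000000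

section Helpers
variable {m n : Type*} [Fintype m] [Fintype n] [DecidableEq m] [DecidableEq n]

/-- selection matrix -/
def selMx (f : n → m) : Matrix n m ℝ := Matrix.of fun i j => if f i = j then 1 else 0

lemma selMx_mul_mul (f : n → m) (A : Matrix m m ℝ) :
    selMx f * A * (selMx f)ᵀ = A.submatrix f f := by
  ext i j
  simp [selMx, Matrix.mul_apply, ite_mul, mul_ite, Finset.sum_ite_eq, Finset.sum_ite_eq']

lemma selMx_conjTranspose (f : n → m) : (selMx f)ᴴ = (selMx f)ᵀ := by
  ext i j; simp [selMx, Matrix.conjTranspose_apply, Matrix.transpose_apply]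

lemma rank_principal_submatrix_le (f : n → m) (A : Matrix m m ℝ) :
    (A.submatrix f f).rank ≤ A.rank := by
  rw [← selMx_mul_mul]
  exact (Matrix.rank_mul_le_left _ _).trans (Matrix.rank_mul_le_right _ _)

lemma posSemidef_principal_submatrix {A : Matrix m m ℝ} (hA : A.PosSemidef) (f : n → m) :
    (A.submatrix f f).PosSemidef := by
  rw [← selMx_mul_mul]
  have := hA.mul_mul_conjTranspose_same (selMx f)
  rwa [selMx_conjTranspose] at this

lemma matrix_rank_add_le (A B : Matrix m n ℝ) : (A + B).rank ≤ A.rank + B.rank := by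
  rw [Matrix.rank, Matrix.rank, Matrix.rank, Matrix.mulVecLin_add]
  have h : LinearMap.range (A.mulVecLin + B.mulVecLin) ≤
      LinearMap.range A.mulVecLin ⊔ LinearMap.range B.mulVecLin := by
    rintro x ⟨y, rfl⟩
    exact Submodule.add_mem_sup ⟨y, rfl⟩ ⟨y, rfl⟩
  refine (Submodule.finrank_mono h).trans ?_
  have := Submodule.finrank_sup_add_finrank_inf_eq
    (LinearMap.range A.mulVecLin) (LinearMap.range B.mulVecLin)
  omega

lemma rank_vecMulVec_le (u v : m → ℝ) : (Matrix.vecMulVec u v).rank ≤ 1 := by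
  rw [Matrix.vecMulVec_eq Unit]
  exact (Matrix.rank_mul_le_right _ _).trans
    ((Matrix.rank_le_card_height _).trans (by simp))

lemma posSemidef_vecMulVec' (u : m → ℝ) : (Matrix.vecMulVec u u).PosSemidef := by
  have h := Matrix.posSemidef_conjTranspose_mul_self (Matrix.replicateRow Unit u)
  have he : (Matrix.replicateRow Unit u)ᴴ * (Matrix.replicateRow Unit u) = Matrix.vecMulVec u u := by
    simp [Matrix.vecMulVec_eq Unit, Matrix.conjTranspose_replicateRow]
  rwa [he] at h

end Helpers

section Helpers2
variable {m : Type*} [Fintype m] [DecidableEq m]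

lemma posDef_add_vecMulVec {M : Matrix m m ℝ} (hM : M.PosSemidef) (v : m → ℝ)
    (h : ∀ x, M *ᵥ x = 0 → x ≠ 0 → v ⬝ᵥ x ≠ 0) :
    (M + Matrix.vecMulVec v v).PosDef := by
  have hsx : ∀ x : m → ℝ, star x = x := fun x => by simp
  refine posDef_iff_dotProduct_mulVec.mpr ⟨hM.1.add (posSemidef_vecMulVec' v).1, fun x hx => ?_⟩
  have hmv : Matrix.vecMulVec v v *ᵥ x = (v ⬝ᵥ x) • v := by
    ext i
    simp only [Matrix.mulVec, Matrix.vecMulVec_apply, dotProduct, Pi.smul_apply,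
      smul_eq_mul, Finset.sum_mul]
    exact Finset.sum_congr rfl fun j _ => by ring
  have hq : star x ⬝ᵥ (M + Matrix.vecMulVec v v) *ᵥ x = x ⬝ᵥ M *ᵥ x + (v ⬝ᵥ x) ^ 2 := by
    rw [hsx, Matrix.add_mulVec, dotProduct_add, hmv, dotProduct_smul, smul_eq_mul,
      dotProduct_comm x v, sq]
  rw [hq]
  by_cases hMx : M *ᵥ x = 0
  · have h2 : v ⬝ᵥ x ≠ 0 := h x hMx hx
    rw [hMx, dotProduct_zero]
    positivity
  · have h1 : 0 ≤ x ⬝ᵥ M *ᵥ x := by have := hM.dotProduct_mulVec_nonneg x; rwa [hsx] at this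
    have h2 : x ⬝ᵥ M *ᵥ x ≠ 0 := by
      intro hc
      exact hMx ((hM.dotProduct_mulVec_zero_iff x).mp (by rwa [hsx]))
    have := sq_nonneg (v ⬝ᵥ x)
    have h3 : 0 < x ⬝ᵥ M *ᵥ x := lt_of_le_of_ne h1 (Ne.symm h2)
    linarith

lemma exists_ker_spanning {M : Matrix m m ℝ} (h : M.rank + 1 = Fintype.card m) :
    ∃ w : m → ℝ, w ≠ 0 ∧ M *ᵥ w = 0 ∧ ∀ x, M *ᵥ x = 0 → ∃ c : ℝ, x = c • w := by
  have hrn := LinearMap.finrank_range_add_finrank_ker M.mulVecLin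
  rw [Module.finrank_pi] at hrn
  have hker : Module.finrank ℝ (LinearMap.ker M.mulVecLin) = 1 := by
    have hr : M.rank = Module.finrank ℝ (LinearMap.range M.mulVecLin) := rfl
    omega
  have hne : LinearMap.ker M.mulVecLin ≠ ⊥ := by
    intro hc
    rw [hc, finrank_bot] at hker
    omega
  obtain ⟨w, hwmem, hw0⟩ := Submodule.ne_bot_iff _ |>.mp hne
  have hspan : LinearMap.ker M.mulVecLin ≤ Submodule.span ℝ {w} := by
    have hle : Submodule.span ℝ {w} ≤ LinearMap.ker M.mulVecLin := by
      rw [Submodule.span_le, Set.singleton_subset_iff]; exact hwmem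
    have := Submodule.eq_of_le_of_finrank_le hle
      (by rw [hker, finrank_span_singleton hw0])
    rw [this]
  refine ⟨w, hw0, by simpa [Matrix.mulVecLin_apply] using hwmem, fun x hx => ?_⟩
  have hxmem : x ∈ Submodule.span ℝ {w} := hspan (by simpa [LinearMap.mem_ker, Matrix.mulVecLin_apply] using hx)
  obtain ⟨c, hc⟩ := Submodule.mem_span_singleton.mp hxmem
  exact ⟨c, hc.symm⟩

lemma exists_forall_dotProduct_ne_zero {p : ℕ} {ι : Type*} [Finite ι]
    (W : ι → (Fin p → ℝ)) (hW : ∀ i, W i ≠ 0) :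
    ∃ u : Fin p → ℝ, ∀ i, W i ⬝ᵥ u ≠ 0 := by
  by_contra hcon
  push_neg at hcon
  let f : ι → (Fin p → ℝ) →ₗ[ℝ] ℝ := fun i =>
    { toFun := fun u => W i ⬝ᵥ u
      map_add' := fun x y => dotProduct_add _ _ _
      map_smul' := fun c x => by simp [dotProduct_smul] }
  have hS : ∀ i, (volume : Measure (Fin p → ℝ)) (LinearMap.ker (f i)) = 0 := by
    intro i
    refine Measure.addHaar_submodule _ _ (fun htop => ?_)
    have hmem : W i ∈ LinearMap.ker (f i) := htop ▸ Submodule.mem_top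
    rw [LinearMap.mem_ker] at hmem
    exact hW i (dotProduct_self_eq_zero.mp hmem)
  have hcover : (Set.univ : Set (Fin p → ℝ)) ⊆ ⋃ i, (LinearMap.ker (f i) : Set (Fin p → ℝ)) := by
    intro u _
    obtain ⟨i, hi⟩ := hcon u
    exact Set.mem_iUnion.2 ⟨i, hi⟩
  have h0 : volume (Set.univ : Set (Fin p → ℝ)) = 0 :=
    measure_mono_null hcover (measure_iUnion_null hS)
  have h1 : volume (Set.univ : Set (Fin p → ℝ)) ≠ 0 :=
    IsOpen.measure_ne_zero _ isOpen_univ Set.univ_nonempty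
  exact h1 h0

end Helpers2

section Helpers3
variable {V : Type*} [Fintype V] [DecidableEq V]

lemma det_submatrix_ne_zero_of_minors {M : Matrix V V ℝ} {k : ℕ}
    (h : ∀ α : Finset V, α.card = k →
      (M.submatrix (fun i : α => (i : V)) (fun i : α => (i : V))).det ≠ 0)
    {ι : Type*} [Fintype ι] [DecidableEq ι] (g : ι → V) (hg : Function.Injective g)
    (hcard : Fintype.card ι = k) : (M.submatrix g g).det ≠ 0 := by
  classical
  set α : Finset V := Finset.univ.image g with hα
  have hαcard : α.card = k := by
    rw [hα, Finset.card_image_of_injective _ hg, Finset.card_univ, hcard]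
  have hmem : ∀ i : ι, g i ∈ α := fun i => Finset.mem_image_of_mem g (Finset.mem_univ i)
  have hbij : Function.Bijective (fun i : ι => (⟨g i, hmem i⟩ : α)) := by
    constructor
    · intro a b hab
      exact hg (congrArg Subtype.val hab)
    · rintro ⟨v, hv⟩
      obtain ⟨i, -, rfl⟩ := Finset.mem_image.mp hv
      exact ⟨i, rfl⟩
  let e : ι ≃ α := Equiv.ofBijective _ hbij
  have hsub : M.submatrix g g =
      (M.submatrix (fun i : α => (i : V)) (fun i : α => (i : V))).submatrix e e := by
    ext i j; rfl
  rw [hsub, Matrix.det_submatrix_equiv_self]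
  exact h α hαcard

lemma rank_eq_of_minors (M : Matrix V V ℝ) (k : ℕ)
    (hle : M.rank ≤ k) (hcard : k ≤ Fintype.card V)
    (hminor : ∀ α : Finset V, α.card = k →
      (M.submatrix (fun i : α => (i : V)) (fun i : α => (i : V))).det ≠ 0) :
    M.rank = k := by
  refine le_antisymm hle ?_
  obtain ⟨α, -, hα⟩ := Finset.exists_subset_card_eq (s := (Finset.univ : Finset V))
    (by simpa using hcard)
  have hunit : IsUnit (M.submatrix (fun i : α => (i : V)) (fun i : α => (i : V))) :=
    (Matrix.isUnit_iff_isUnit_det _).2 (isUnit_iff_ne_zero.2 (hminor α hα))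
  have h1 := Matrix.rank_of_isUnit _ hunit
  have h2 := rank_principal_submatrix_le (fun i : α => (i : V)) M
  rw [h1, Fintype.card_coe, hα] at h2
  exact h2

end Helpers3


/-- If `A` is a `p × p` real symmetric positive semidefinite matrix of rank
`d ≤ p - 1` in general position, then there is `u ∈ ℝ^p` such that `A + u uᵀ` is positive
semidefinite of rank `d + 1` in general position, and the bordered `(p+1) × (p+1)` matrix
`[[1, uᵀ], [u, A + u uᵀ]]` is positive semidefinite of rank `d + 1` in general position. -/
theorem exists_add_vecMulVec_inGenPos {p d : ℕ} (A : Matrix (Fin p) (Fin p) ℝ)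
    (hA : InGenPos A d) (hd : d + 1 ≤ p) :
    ∃ u : Fin p → ℝ,
      InGenPos (A + Matrix.vecMulVec u u) (d + 1) ∧
      InGenPos (Matrix.fromBlocks (1 : Matrix Unit Unit ℝ)
        (Matrix.of fun _ j => u j) (Matrix.of fun i _ => u i)
        (A + Matrix.vecMulVec u u)) (d + 1) := by
  classical
  obtain ⟨hApsd, hArank, hAgen⟩ := hA
  -- rank of each (d+1)-principal submatrix is d
  have hrankα : ∀ α : Finset (Fin p), α.card = d + 1 →
      (A.submatrix (fun i : α => (i : Fin p)) (fun i : α => (i : Fin p))).rank = d := by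
    intro α hα
    refine le_antisymm (hArank ▸ rank_principal_submatrix_le _ A) ?_
    obtain ⟨β, hβsub, hβcard⟩ := Finset.exists_subset_card_eq (s := α) (n := d) (by omega)
    have hunit : IsUnit (A.submatrix (fun i : β => (i : Fin p)) (fun i : β => (i : Fin p))) :=
      (Matrix.isUnit_iff_isUnit_det _).2 (isUnit_iff_ne_zero.2 (hAgen β hβcard))
    have h1 := Matrix.rank_of_isUnit _ hunit
    have h2 : A.submatrix (fun i : β => (i : Fin p)) (fun i : β => (i : Fin p)) =
        (A.submatrix (fun i : α => (i : Fin p)) (fun i : α => (i : Fin p))).submatrix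
          (fun x : β => (⟨(x : Fin p), hβsub x.2⟩ : α)) (fun x : β => (⟨(x : Fin p), hβsub x.2⟩ : α)) :=
      rfl
    have h3 := rank_principal_submatrix_le (fun x : β => (⟨(x : Fin p), hβsub x.2⟩ : α))
      (A.submatrix (fun i : α => (i : Fin p)) (fun i : α => (i : Fin p)))
    rw [← h2, h1, Fintype.card_coe, hβcard] at h3
    exact h3
  -- choose spanning kernel vectors
  have hker : ∀ i : {α : Finset (Fin p) // α.card = d + 1},
      ∃ w : {x // x ∈ i.1} → ℝ, w ≠ 0 ∧
      (A.submatrix (fun t : {x // x ∈ i.1} => (t : Fin p)) (fun t : {x // x ∈ i.1} => (t : Fin p))) *ᵥ w = 0 ∧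
      ∀ x, (A.submatrix (fun t : {x // x ∈ i.1} => (t : Fin p)) (fun t : {x // x ∈ i.1} => (t : Fin p))) *ᵥ x = 0 →
        ∃ c : ℝ, x = c • w := by
    intro i
    apply exists_ker_spanning
    rw [hrankα i.1 i.2]
    simp [Fintype.card_coe, i.2]
  choose w hw0 hwker hwspan using hker
  set W : {α : Finset (Fin p) // α.card = d + 1} → Fin p → ℝ :=
    fun i j => if h : j ∈ i.1 then w i ⟨j, h⟩ else 0 with hW
  have hWne : ∀ i, W i ≠ 0 := by
    intro i hzero
    apply hw0 i
    funext t
    have h := congrFun hzero (t : Fin p)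
    simpa [hW, t.2] using h
  obtain ⟨u, hu⟩ := exists_forall_dotProduct_ne_zero W hWne
  have hdot : ∀ i : {α : Finset (Fin p) // α.card = d + 1},
      (fun t : {x // x ∈ i.1} => u (t : Fin p)) ⬝ᵥ w i = W i ⬝ᵥ u := by
    intro i
    have h1 : W i ⬝ᵥ u = ∑ j ∈ i.1, W i j * u j := by
      rw [dotProduct]
      exact (Finset.sum_subset (Finset.subset_univ _) (fun j _ hj => by simp [hW, hj])).symm
    have h2 : ∑ j ∈ i.1, W i j * u j = ∑ t ∈ i.1.attach, W i (t : Fin p) * u (t : Fin p) :=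
      (Finset.sum_attach _ _).symm
    rw [h1, h2, dotProduct, Finset.univ_eq_attach]
    refine Finset.sum_congr rfl fun t _ => ?_
    have : W i (t : Fin p) = w i t := by simp [hW, t.2]
    rw [this]; ring
  have hkercond : ∀ i : {α : Finset (Fin p) // α.card = d + 1}, ∀ x,
      (A.submatrix (fun t : {x // x ∈ i.1} => (t : Fin p)) (fun t : {x // x ∈ i.1} => (t : Fin p))) *ᵥ x = 0 →
      x ≠ 0 → (fun t : {x // x ∈ i.1} => u (t : Fin p)) ⬝ᵥ x ≠ 0 := by
    intro i x hx hx0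
    obtain ⟨c, hc⟩ := hwspan i x hx
    have hc0 : c ≠ 0 := by rintro rfl; rw [zero_smul] at hc; exact hx0 hc
    rw [hc, dotProduct_smul, smul_eq_mul]
    exact mul_ne_zero hc0 (by rw [hdot i]; exact hu i)
  have hposdef : ∀ α : Finset (Fin p), α.card = d + 1 →
      ((A + Matrix.vecMulVec u u).submatrix (fun i : α => (i : Fin p)) (fun i : α => (i : Fin p))).PosDef := by
    intro α hα
    have hsub : (A + Matrix.vecMulVec u u).submatrix (fun i : α => (i : Fin p)) (fun i : α => (i : Fin p))
        = A.submatrix (fun i : α => (i : Fin p)) (fun i : α => (i : Fin p))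
          + Matrix.vecMulVec (fun t : α => u (t : Fin p)) (fun t : α => u (t : Fin p)) := by
      ext i j; simp [Matrix.vecMulVec_apply]
    rw [hsub]
    exact posDef_add_vecMulVec (posSemidef_principal_submatrix hApsd _) _ (hkercond ⟨α, hα⟩)
  have hminors1 : ∀ α : Finset (Fin p), α.card = d + 1 →
      ((A + Matrix.vecMulVec u u).submatrix (fun i : α => (i : Fin p)) (fun i : α => (i : Fin p))).det ≠ 0 :=
    fun α hα => (hposdef α hα).det_pos.ne'
  have hgen1 : InGenPos (A + Matrix.vecMulVec u u) (d + 1) := by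
    refine ⟨hApsd.add (posSemidef_vecMulVec' u), ?_, hminors1⟩
    refine rank_eq_of_minors _ _ ?_ (by simpa using hd) hminors1
    calc (A + Matrix.vecMulVec u u).rank ≤ A.rank + (Matrix.vecMulVec u u).rank :=
          matrix_rank_add_le _ _
      _ ≤ d + 1 := by rw [hArank]; exact Nat.add_le_add_left (_root_.rank_vecMulVec_le u u) d
  -- bordered matrix
  set B : Matrix (Unit ⊕ Fin p) (Unit ⊕ Fin p) ℝ :=
    Matrix.fromBlocks (1 : Matrix Unit Unit ℝ)
      (Matrix.of fun _ j => u j) (Matrix.of fun i _ => u i)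
      (A + Matrix.vecMulVec u u) with hBdef
  set E : Matrix (Unit ⊕ Fin p) (Fin p) ℝ :=
    Matrix.of fun i j => if i = Sum.inr j then 1 else 0 with hEdef
  set vv : Unit ⊕ Fin p → ℝ := Sum.elim (fun _ => 1) u with hvv
  have hEH : Eᴴ = Eᵀ := by
    ext i j; simp [hEdef, Matrix.conjTranspose_apply]
  have hE : E * A * Eᴴ = Matrix.fromBlocks 0 0 0 A := by
    rw [hEH]
    ext i j
    rcases i with i | i <;> rcases j with j | j <;>
      simp [hEdef, Matrix.mul_apply, ite_mul, mul_ite, Finset.sum_ite_eq, Finset.sum_ite_eq']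
  have hB : B = E * A * Eᴴ + Matrix.vecMulVec vv vv := by
    rw [hE]
    ext i j
    rcases i with i | i <;> rcases j with j | j <;>
      simp [hBdef, hvv, Matrix.vecMulVec_apply, Matrix.one_apply]
  have hminors2 : ∀ γ : Finset (Unit ⊕ Fin p), γ.card = d + 1 →
      (B.submatrix (fun t : γ => (t : Unit ⊕ Fin p)) (fun t : γ => (t : Unit ⊕ Fin p))).det ≠ 0 := by
    intro γ hγ
    by_cases hmem : Sum.inl () ∈ γ
    · -- contains the border index
      set α : Finset (Fin p) := γ.toRight with hαdef
      have hcardL : γ.toLeft = {()} := by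
        ext z; cases z; simp [hmem]
      have hαcard : α.card = d := by
        have h := Finset.card_toLeft_add_card_toRight (u := γ)
        rw [hcardL, hγ] at h
        simpa using Nat.succ_injective (by simpa [Nat.add_comm] using h)
      have hmemγ : ∀ a : {x // x ∈ α}, Sum.inr (a : Fin p) ∈ γ :=
        fun a => Finset.mem_toRight.mp a.2
      let e : Unit ⊕ {x // x ∈ α} → {x // x ∈ γ} := fun t =>
        Sum.elim (fun (_ : Unit) => (⟨Sum.inl (), hmem⟩ : {x // x ∈ γ}))
          (fun (a : {x // x ∈ α}) => (⟨Sum.inr (a : Fin p), hmemγ a⟩ : {x // x ∈ γ})) t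
      have hbij : Function.Bijective e := by
        constructor
        · rintro (z | a) (z' | a') h
          · cases z; cases z'; rfl
          · exact absurd (congrArg Subtype.val h) (by simp [e])
          · exact absurd (congrArg Subtype.val h) (by simp [e])
          · have : (a : Fin p) = (a' : Fin p) := by
              have := congrArg Subtype.val h
              simpa [e] using this
            rw [show a = a' from Subtype.ext this]
        · rintro ⟨z | a, hx⟩
          · cases z; exact ⟨Sum.inl (), rfl⟩
          · exact ⟨Sum.inr ⟨a, Finset.mem_toRight.mpr hx⟩, rfl⟩
      rw [← Matrix.det_submatrix_equiv_self (Equiv.ofBijective e hbij)]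
      have hBsub : (B.submatrix (fun t : γ => (t : Unit ⊕ Fin p)) (fun t : γ => (t : Unit ⊕ Fin p))).submatrix
            (Equiv.ofBijective e hbij) (Equiv.ofBijective e hbij) =
          Matrix.fromBlocks 1
            (Matrix.of fun (_ : Unit) (j : {x // x ∈ α}) => u (j : Fin p))
            (Matrix.of fun (i : {x // x ∈ α}) (_ : Unit) => u (i : Fin p))
            ((A + Matrix.vecMulVec u u).submatrix (fun t : {x // x ∈ α} => (t : Fin p))
              (fun t : {x // x ∈ α} => (t : Fin p))) := by
        ext x y
        rcases x with x | x <;> rcases y with y | y <;>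
          simp [e, hBdef, Matrix.one_apply]
      rw [hBsub, Matrix.det_fromBlocks_one₁₁]
      have hCB : (A + Matrix.vecMulVec u u).submatrix (fun t : {x // x ∈ α} => (t : Fin p))
            (fun t : {x // x ∈ α} => (t : Fin p)) -
          (Matrix.of fun (i : {x // x ∈ α}) (_ : Unit) => u (i : Fin p)) *
            (Matrix.of fun (_ : Unit) (j : {x // x ∈ α}) => u (j : Fin p)) =
          A.submatrix (fun t : {x // x ∈ α} => (t : Fin p)) (fun t : {x // x ∈ α} => (t : Fin p)) := by
        ext x y
        simp [Matrix.mul_apply, Matrix.vecMulVec_apply]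
      rw [hCB]
      exact hAgen α hαcard
    · -- does not contain the border index
      have hsur : ∀ x : {t // t ∈ γ}, ∃ a : Fin p, (x : Unit ⊕ Fin p) = Sum.inr a := by
        rintro ⟨z | a, hx⟩
        · cases z; exact absurd hx hmem
        · exact ⟨a, rfl⟩
      choose g hg using hsur
      have hginj : Function.Injective g := by
        intro x y hxy
        apply Subtype.ext
        rw [hg x, hg y, hxy]
      have hsubeq : B.submatrix (fun t : γ => (t : Unit ⊕ Fin p)) (fun t : γ => (t : Unit ⊕ Fin p)) =
          (A + Matrix.vecMulVec u u).submatrix g g := by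
        ext x y
        rw [Matrix.submatrix_apply, Matrix.submatrix_apply, hg x, hg y]
        rfl
      rw [hsubeq]
      exact det_submatrix_ne_zero_of_minors hminors1 g hginj (by rw [Fintype.card_coe, hγ])
  have hgen2 : InGenPos B (d + 1) := by
    refine ⟨?_, ?_, hminors2⟩
    · rw [hB]
      exact (hApsd.mul_mul_conjTranspose_same E).add (posSemidef_vecMulVec' vv)
    · refine rank_eq_of_minors _ _ ?_ (by simp [Fintype.card_sum]; omega) hminors2
      calc B.rank ≤ (E * A * Eᴴ).rank + (Matrix.vecMulVec vv vv).rank := by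
            rw [hB]; exact matrix_rank_add_le _ _
        _ ≤ d + 1 := by
            have h1 : (E * A * Eᴴ).rank ≤ A.rank :=
              (Matrix.rank_mul_le_left _ _).trans (Matrix.rank_mul_le_right _ _)
            have h2 := _root_.rank_vecMulVec_le vv vv
            rw [hArank] at h1
            omega
  exact ⟨u, hgen1, hgen2⟩
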